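/- Set Q = 1 − q² and define the F-linear maps X₀ = A_L, X₁ = Q(A*_ℓ − B*_r K), X₂ = B_L, X₃ = Q(B*_ℓ − A*_r K⁻¹) on V. Then for each i ∈ ℤ₄ (indices mod 4), (q·X_i X_{i+1} − q⁻¹·X_{i+1} X_i)/(q − q⁻¹) = I on V; moreover X₁ and X₃ satisfy the q-Serre relations: X₁³X₃ − [3]_q X₁²X₃X₁ + [3]_q X₁X₃X₁² − X₃X₁³ = 0 and X₃³X₁ − [3]_q X₃²X₁X₃ + [3]_q X₃X₁X₃² − X₁X₃³ = 0. -/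

import Mathlib

noncomputable section
namespace SqPaper

/-- The two letters: `0 ↦ A`, `1 ↦ B`. -/
abbrev Ltr := Fin 2
def lA : Ltr := 0
def lB : Ltr := 1

/-- The pairing `⟨ , ⟩` on letters: `⟨A,A⟩=⟨B,B⟩=2`, `⟨A,B⟩=⟨B,A⟩=-2`. -/
def brk (x y : Ltr) : ℤ := if x = y then 2 else -2

variable (F : Type*) [Field F]

/-- The free algebra `V` on the two generators, realized as the monoid algebra of the
free monoid on two letters; the words form the standard basis. -/
abbrev FA := MonoidAlgebra F (FreeMonoid Ltr)

/-- The standard basis vector attached to a word (list of letters). -/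
def wd (l : List Ltr) : FA F := MonoidAlgebra.single (FreeMonoid.ofList l) 1

def Agen : FA F := wd F [lA]
def Bgen : FA F := wd F [lB]

/-- View an element of `V` as a finitely supported function on words. -/
def fsp (v : FA F) : FreeMonoid Ltr →₀ F := v.coeff

/-- The symmetric bilinear form on `V` for which the standard basis of words is orthonormal. -/
def form (u v : FA F) : F := (fsp F u).sum fun w c => c * (fsp F v) w

/-- Extend a function on words to an `F`-linear map on `V`. -/
def mkMap {M : Type*} [AddCommMonoid M] [Module F M] (f : List Ltr → M) :
    FA F →ₗ[F] M :=
  Finsupp.lsum F (fun w => LinearMap.toSpanSingleton F M (f (FreeMonoid.toList w)))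
    ∘ₗ (MonoidAlgebra.coeffLinearEquiv F).toLinearMap

/-- `[3]_q = (q³ - q⁻³)/(q - q⁻¹)`. -/
def tri (q : F) : F := (q ^ 3 - q⁻¹ ^ 3) / (q - q⁻¹)

/-- The q-shuffle product on words. -/
def shufW (q : F) : List Ltr → List Ltr → FA F
  | [], v => wd F v
  | u, [] => wd F u
  | a :: u, b :: v =>
      wd F [a] * shufW q u (b :: v) +
        (q ^ (((a :: u).map (fun x => brk x b)).sum)) • (wd F [b] * shufW q (a :: u) v)
  termination_by u v => u.length + v.length

/-- The q-shuffle product `⋆` on `V`, as a bilinear map. -/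
def qshuf (q : F) : FA F →ₗ[F] FA F →ₗ[F] FA F :=
  mkMap F fun u => mkMap F fun v => shufW F q u v

/-- Iterated `⋆`-product of the letters of a word. -/
def thetaW (q : F) : List Ltr → FA F
  | [] => 1
  | a :: t => qshuf F q (wd F [a]) (thetaW q t)

/-- `θ : V → V`, the algebra homomorphism from the free algebra to the q-shuffle algebra
with `θ(A) = A`, `θ(B) = B`. -/
def theta (q : F) : FA F →ₗ[F] FA F := mkMap F fun l => thetaW F q l

/-- `A_L`, left multiplication by `A` in the free algebra. -/
def AL : FA F →ₗ[F] FA F := LinearMap.mulLeft F (Agen F)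
def BL : FA F →ₗ[F] FA F := LinearMap.mulLeft F (Bgen F)
def AR : FA F →ₗ[F] FA F := LinearMap.mulRight F (Agen F)
def BR : FA F →ₗ[F] FA F := LinearMap.mulRight F (Bgen F)

/-- `X*_L` (for the letter `x`): deletes the letter `x` from the front of a word. -/
def delL (x : Ltr) : FA F →ₗ[F] FA F :=
  mkMap F fun l => if l.head? = some x then wd F l.tail else 0

/-- `X*_R` (for the letter `x`): deletes the letter `x` from the end of a word. -/
def delR (x : Ltr) : FA F →ₗ[F] FA F :=
  mkMap F fun l => if l.getLast? = some x then wd F l.dropLast else 0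

/-- `X_ℓ`: left q-shuffle multiplication by the letter `x`. -/
def shL (q : F) (x : Ltr) : FA F →ₗ[F] FA F := qshuf F q (wd F [x])

/-- `X_r`: right q-shuffle multiplication by the letter `x`. -/
def shR (q : F) (x : Ltr) : FA F →ₗ[F] FA F := (qshuf F q).flip (wd F [x])

/-- `X*_ℓ`: the weighted deletion map, deleting an occurrence of the letter `x`
with weight `q^{⟨v₁,x⟩+⋯+⟨v_{i-1},x⟩}`. -/
def lowL (q : F) (x : Ltr) : FA F →ₗ[F] FA F :=
  mkMap F fun l =>
    ∑ i ∈ Finset.range l.length,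
      if l[i]? = some x then
        (q ^ (((l.take i).map (fun y => brk y x)).sum)) • wd F (l.eraseIdx i)
      else 0

/-- `X*_r`: the weighted deletion map, deleting an occurrence of the letter `x`
with weight `q^{⟨vₙ,x⟩+⋯+⟨v_{i+1},x⟩}`. -/
def lowR (q : F) (x : Ltr) : FA F →ₗ[F] FA F :=
  mkMap F fun l =>
    ∑ i ∈ Finset.range l.length,
      if l[i]? = some x then
        (q ^ (((l.drop (i + 1)).map (fun y => brk y x)).sum)) • wd F (l.eraseIdx i)
      else 0

/-- `K`, the algebra automorphism of the free algebra `V` with `K(A) = q²A`, `K(B) = q⁻²B`;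
on a word `v = v₁⋯vₙ` it acts as `K(v) = v·q^{⟨v₁,A⟩+⋯+⟨vₙ,A⟩}`. -/
def Kop (q : F) : FA F →ₗ[F] FA F :=
  mkMap F fun l => (q ^ ((l.map (fun y => brk y lA)).sum)) • wd F l

/-- `K⁻¹`; on a word `v = v₁⋯vₙ` it acts as `K⁻¹(v) = v·q^{⟨v₁,B⟩+⋯+⟨vₙ,B⟩}`. -/
def Kinv (q : F) : FA F →ₗ[F] FA F :=
  mkMap F fun l => (q ^ ((l.map (fun y => brk y lB)).sum)) • wd F l

/-- `T`, the automorphism of the free algebra swapping `A` and `B`. -/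
def Top : FA F →ₗ[F] FA F :=
  mkMap F fun l => wd F (l.map (fun x => if x = lA then lB else lA))

/-- `Â = Q(A_L − K B_R)` and `B̂ = Q(B_L − K⁻¹ A_R)` where `Q = 1 - q²`. -/
def hatOp (q : F) (a : Ltr) : FA F →ₗ[F] FA F :=
  if a = lA then (1 - q ^ 2) • (AL F - Kop F q ∘ₗ BR F)
  else (1 - q ^ 2) • (BL F - Kinv F q ∘ₗ AR F)

def phiW (q : F) : List Ltr → FA F
  | [] => 1
  | a :: t => hatOp F q a (phiW q t)

/-- The map `φ`: `φ(1) = 1` and `φ(v₁⋯vₙ) = v̂₁v̂₂⋯v̂ₙ(1)`. -/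
def phi (q : F) : FA F →ₗ[F] FA F := mkMap F fun l => phiW F q l

/-- `ψ = K B_R A*_L + K⁻¹ A_R B*_L`. -/
def psi (q : F) : FA F →ₗ[F] FA F :=
  Kop F q ∘ₗ BR F ∘ₗ delL F lA + Kinv F q ∘ₗ AR F ∘ₗ delL F lB

/-- `V_n`, the span of the words of length `n`. -/
def Vn (n : ℕ) : Submodule F (FA F) :=
  Submodule.span F { x | ∃ l : List Ltr, l.length = n ∧ x = wd F l }

/-- `J⁺ = A³B − [3]_q A²BA + [3]_q ABA² − BA³`. -/
def Jp (q : F) : FA F :=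
  Agen F ^ 3 * Bgen F - tri F q • (Agen F ^ 2 * Bgen F * Agen F)
    + tri F q • (Agen F * Bgen F * Agen F ^ 2) - Bgen F * Agen F ^ 3

/-- `J⁻ = B³A − [3]_q B²AB + [3]_q BAB² − AB³`. -/
def Jm (q : F) : FA F :=
  Bgen F ^ 3 * Agen F - tri F q • (Bgen F ^ 2 * Agen F * Bgen F)
    + tri F q • (Bgen F * Agen F * Bgen F ^ 2) - Agen F * Bgen F ^ 3

/-- `J`, the two-sided ideal of the free algebra generated by `J⁺` and `J⁻`
(realized as the `F`-span of the elements `a·J^±·b`). -/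
def Jsub (q : F) : Submodule F (FA F) :=
  Submodule.span F { x | ∃ a b : FA F, x = a * Jp F q * b ∨ x = a * Jm F q * b }

/-- `U`, the subalgebra of the q-shuffle algebra `(V,⋆)` generated by `A` and `B`,
realized as the span of all `⋆`-products of the letters. -/
def Usub (q : F) : Submodule F (FA F) :=
  Submodule.span F (Set.range fun l : List Ltr => thetaW F q l)

/-- A `□_q`-module structure on an `F`-vector space `M`: four operators
`x₀, x₁, x₂, x₃` (indices mod 4) satisfying the q-Weyl and q-Serre relations. -/
structure SqAct (q : F) (M : Type*) [AddCommGroup M] [Module F M] where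
  x : ZMod 4 → Module.End F M
  weyl : ∀ i : ZMod 4,
    q • (x i * x (i + 1)) - q⁻¹ • (x (i + 1) * x i) = (q - q⁻¹) • (1 : Module.End F M)
  serre : ∀ i : ZMod 4,
    x i ^ 3 * x (i + 2) - tri F q • (x i ^ 2 * x (i + 2) * x i)
      + tri F q • (x i * x (i + 2) * x i ^ 2) - x (i + 2) * x i ^ 3 = 0

variable {F} {q : F} {M : Type*} [AddCommGroup M] [Module F M]

/-- A `□_q`-module `M` is generated by `ξ` if no proper submodule
(subspace invariant under all the `xᵢ`) contains `ξ`. -/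
def SqAct.Gen (S : SqAct F q M) (ξ : M) : Prop :=
  ∀ W : Submodule F M, (∀ i : ZMod 4, ∀ m ∈ W, S.x i m ∈ W) → ξ ∈ W → W = ⊤

/-- `W_n`: the span of the vectors `u₁u₂⋯uₙ·ξ` with each `uᵢ ∈ {x₀, x₂}`. -/
def SqAct.Wn (S : SqAct F q M) (ξ : M) (n : ℕ) : Submodule F M :=
  Submodule.span F
    { m | ∃ l : List (ZMod 4), l.length = n ∧ (∀ i ∈ l, i = 0 ∨ i = 2) ∧
        m = l.foldr (fun i acc => S.x i acc) ξ }

variable {F : Type*} [Field F]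

lemma mkMap_wd {M : Type*} [AddCommMonoid M] [Module F M] (f : List Ltr → M) (l : List Ltr) :
    mkMap F f (wd F l) = f l := by
  show (Finsupp.lsum F fun w => LinearMap.toSpanSingleton F M (f (FreeMonoid.toList w)))
    (Finsupp.single (FreeMonoid.ofList l) 1) = f l
  rw [Finsupp.lsum_single]
  simp [LinearMap.toSpanSingleton_apply]

lemma wd_cons (a : Ltr) (l : List Ltr) : wd F (a :: l) = wd F [a] * wd F l := by
  rw [wd, wd, wd, MonoidAlgebra.single_mul_single, one_mul]
  rfl

lemma lhom_ext {f g : FA F →ₗ[F] FA F} (h : ∀ l, f (wd F l) = g (wd F l)) : f = g := by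
  apply MonoidAlgebra.lhom_ext'
  intro a
  refine LinearMap.ext fun b => ?_
  simp only [LinearMap.comp_apply, MonoidAlgebra.lsingle_apply]
  have h2 : (MonoidAlgebra.single a b : FA F) = b • wd F (FreeMonoid.toList a) := by
    simp [wd, MonoidAlgebra.smul_single]
  rw [h2, map_smul, map_smul]
  exact congrArg _ (h _)


variable {F : Type*} [Field F]

lemma lowL_nil (q : F) (x : Ltr) : lowL F q x (wd F []) = 0 := by
  rw [lowL, mkMap_wd]; simp

lemma lowR_nil (q : F) (x : Ltr) : lowR F q x (wd F []) = 0 := by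
  rw [lowR, mkMap_wd]; simp

lemma lowL_cons (q : F) (hq : q ≠ 0) (x a : Ltr) (l : List Ltr) :
    lowL F q x (wd F (a :: l)) =
      (if a = x then wd F l else 0) +
        q ^ (brk a x) • (wd F [a] * lowL F q x (wd F l)) := by
  rw [lowL, mkMap_wd, mkMap_wd]
  rw [List.length_cons, Finset.sum_range_succ']
  have hterm : ∀ i ∈ Finset.range l.length,
      (if (a :: l)[i+1]? = some x then
        (q ^ (((a :: l).take (i+1)).map (fun y => brk y x)).sum) • wd F ((a :: l).eraseIdx (i+1))
      else 0) =
      q ^ (brk a x) • (wd F [a] *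
        (if l[i]? = some x then
          (q ^ ((l.take i).map (fun y => brk y x)).sum) • wd F (l.eraseIdx i) else 0)) := by
    intro i _
    simp only [List.getElem?_cons_succ, List.take_succ_cons, List.map_cons, List.sum_cons,
      List.eraseIdx_cons_succ]
    by_cases h : l[i]? = some x
    · rw [if_pos h, if_pos h, zpow_add₀ hq, mul_smul, wd_cons a (l.eraseIdx i), mul_smul_comm]
    · rw [if_neg h, if_neg h, mul_zero, smul_zero]
  rw [Finset.sum_congr rfl hterm, ← Finset.smul_sum]
  have hmul : ∑ i ∈ Finset.range l.length, (wd F [a] *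
      (if l[i]? = some x then
        (q ^ ((l.take i).map (fun y => brk y x)).sum) • wd F (l.eraseIdx i) else 0)) =
      wd F [a] * ∑ i ∈ Finset.range l.length,
      (if l[i]? = some x then
        (q ^ ((l.take i).map (fun y => brk y x)).sum) • wd F (l.eraseIdx i) else 0) := by
    rw [Finset.mul_sum]
  rw [hmul]
  simp only [List.getElem?_cons_zero, Option.some.injEq, List.take_zero, List.map_nil,
    List.sum_nil, zpow_zero, one_smul, List.eraseIdx_cons_zero]
  exact add_comm _ _

lemma lowR_cons (q : F) (x a : Ltr) (l : List Ltr) :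
    lowR F q x (wd F (a :: l)) =
      (if a = x then (q ^ ((l.map (fun y => brk y x)).sum)) • wd F l else 0) +
        wd F [a] * lowR F q x (wd F l) := by
  rw [lowR, mkMap_wd, mkMap_wd]
  rw [List.length_cons, Finset.sum_range_succ']
  have hterm : ∀ i ∈ Finset.range l.length,
      (if (a :: l)[i+1]? = some x then
        (q ^ (((a :: l).drop (i+1+1)).map (fun y => brk y x)).sum) • wd F ((a :: l).eraseIdx (i+1))
      else 0) =
      wd F [a] *
        (if l[i]? = some x then
          (q ^ ((l.drop (i+1)).map (fun y => brk y x)).sum) • wd F (l.eraseIdx i) else 0) := by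
    intro i _
    simp only [List.getElem?_cons_succ, List.drop_succ_cons, List.eraseIdx_cons_succ]
    by_cases h : l[i]? = some x
    · rw [if_pos h, if_pos h, wd_cons a (l.eraseIdx i), mul_smul_comm]
    · rw [if_neg h, if_neg h, mul_zero]
  rw [Finset.sum_congr rfl hterm, ← Finset.mul_sum]
  simp only [List.getElem?_cons_zero, Option.some.injEq, List.drop_succ_cons, List.drop_zero,
    List.eraseIdx_cons_zero]
  exact add_comm _ _


variable {F : Type*} [Field F]

def Kgen (q : F) (x : Ltr) : FA F →ₗ[F] FA F :=
  mkMap F fun l => (q ^ ((l.map (fun y => brk y x)).sum)) • wd F l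

lemma Kop_eq (q : F) : Kop F q = Kgen q lA := rfl
lemma Kinv_eq (q : F) : Kinv F q = Kgen q lB := rfl

lemma Kgen_wd (q : F) (x : Ltr) (l : List Ltr) :
    Kgen q x (wd F l) = (q ^ ((l.map (fun y => brk y x)).sum)) • wd F l :=
  mkMap_wd _ _

lemma brk_self (x : Ltr) : brk x x = 2 := by rw [brk, if_pos rfl]
lemma brk_ne {x y : Ltr} (h : y ≠ x) : brk x y = -2 := by
  rw [brk, if_neg (fun e => h e.symm)]
lemma brk_ne' {x y : Ltr} (h : y ≠ x) : brk y x = -2 := by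
  rw [brk, if_neg h]
lemma brk_opp : ∀ x y z : Ltr, y ≠ x → brk z x = - brk z y := by decide

lemma sum_opp {x y : Ltr} (h : y ≠ x) (l : List Ltr) :
    ((l.map (fun z => brk z x))).sum = -((l.map (fun z => brk z y))).sum := by
  induction l with
  | nil => simp
  | cons a t ih => simp only [List.map_cons, List.sum_cons, ih, brk_opp x y a h]; ring

def Xg (q : F) (x y : Ltr) : FA F →ₗ[F] FA F :=
  (1 - q ^ 2) • (lowL F q x - lowR F q y ∘ₗ Kgen q x)

lemma Xg_apply (q : F) (x y : Ltr) (v : FA F) :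
    Xg q x y v = (1 - q ^ 2) • (lowL F q x v - lowR F q y (Kgen q x v)) := rfl

lemma Xg_nil (q : F) (x y : Ltr) : Xg q x y (wd F []) = 0 := by
  rw [Xg_apply, Kgen_wd]
  simp [lowL_nil, lowR_nil]

lemma Xg_cons_same (q : F) (hq : q ≠ 0) {x y : Ltr} (h : y ≠ x) (l : List Ltr) :
    Xg q x y (wd F (x :: l)) =
      (q ^ 2) • (wd F [x] * Xg q x y (wd F l)) + (1 - q ^ 2) • wd F l := by
  rw [Xg_apply, Xg_apply, lowL_cons q hq x x l, if_pos rfl, Kgen_wd, Kgen_wd, map_smul,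
    lowR_cons, if_neg (fun e => h e.symm)]
  simp only [map_smul, List.map_cons, List.sum_cons, brk_self, zero_add, mul_smul_comm,
    smul_add, smul_sub, smul_smul, mul_sub, mul_add, zero_mul, smul_zero,
    zero_add, add_zero, mul_zero]
  match_scalars <;> simp only [zpow_add₀ hq, zpow_neg, zpow_ofNat] <;> field_simp <;> ring

lemma Xg_cons_other (q : F) (hq : q ≠ 0) {x y : Ltr} (h : y ≠ x) (l : List Ltr) :
    Xg q x y (wd F (y :: l)) =
      ((q ^ 2)⁻¹) • (wd F [y] * Xg q x y (wd F l)) + (1 - (q ^ 2)⁻¹) • wd F l := by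
  rw [Xg_apply, Xg_apply, lowL_cons q hq x y l, if_neg h, Kgen_wd, Kgen_wd, map_smul,
    lowR_cons, if_pos rfl]
  simp only [map_smul, List.map_cons, List.sum_cons, brk_ne h, brk_ne' h, brk_self,
    mul_smul_comm, smul_add, smul_sub, smul_smul, mul_sub, mul_add, zero_mul, smul_zero,
    zero_add, add_zero, mul_zero, sum_opp h l]
  have hs : q ^ ((l.map fun z => brk z y).sum) ≠ 0 := zpow_ne_zero _ hq
  match_scalars <;> simp only [zpow_add₀ hq, zpow_neg, zpow_ofNat] <;>
    field_simp [hs] <;> ring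


lemma Xg_mulLeft_same (q : F) (hq : q ≠ 0) {x y : Ltr} (h : y ≠ x) :
    Xg q x y * LinearMap.mulLeft F (wd F [x]) =
      (q ^ 2) • (LinearMap.mulLeft F (wd F [x]) * Xg q x y) + (1 - q ^ 2) • 1 := by
  apply lhom_ext
  intro l
  simp only [Module.End.mul_apply, LinearMap.add_apply, LinearMap.smul_apply,
    Module.End.one_apply, LinearMap.mulLeft_apply]
  rw [← wd_cons, Xg_cons_same q hq h l]

lemma Xg_mulLeft_other (q : F) (hq : q ≠ 0) {x y : Ltr} (h : y ≠ x) :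
    Xg q x y * LinearMap.mulLeft F (wd F [y]) =
      ((q ^ 2)⁻¹) • (LinearMap.mulLeft F (wd F [y]) * Xg q x y) + (1 - (q ^ 2)⁻¹) • 1 := by
  apply lhom_ext
  intro l
  simp only [Module.End.mul_apply, LinearMap.add_apply, LinearMap.smul_apply,
    Module.End.one_apply, LinearMap.mulLeft_apply]
  rw [← wd_cons, Xg_cons_other q hq h l]

lemma key_comm {R : Type*} [Ring R] [Algebra F R] {u t : F} (hu : u ≠ 0)
    (ht : t = u + 1 + u⁻¹) (x y a : R)
    (hx : x * a = u • (a * x) + (1 - u) • 1)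
    (hy : y * a = u⁻¹ • (a * y) + (1 - u⁻¹) • 1) :
    (x*(x*(x*y)) - t•(x*(x*(y*x))) + t•(x*(y*(x*x))) - y*(x*(x*x))) * a
      = (u*u) • (a * (x*(x*(x*y)) - t•(x*(x*(y*x))) + t•(x*(y*(x*x))) - y*(x*(x*x)))) := by
  subst ht
  have hx' : ∀ r : R, x*(a*r) = u•(a*(x*r)) + (1-u)•r := by
    intro r
    rw [← mul_assoc, hx, add_mul, smul_mul_assoc, smul_mul_assoc, one_mul, mul_assoc]
  have hy' : ∀ r : R, y*(a*r) = u⁻¹•(a*(y*r)) + (1-u⁻¹)•r := by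
    intro r
    rw [← mul_assoc, hy, add_mul, smul_mul_assoc, smul_mul_assoc, one_mul, mul_assoc]
  simp only [sub_mul, add_mul, smul_mul_assoc, mul_assoc]
  simp only [hx, hy, hx', hy', mul_add, mul_smul_comm, smul_add, smul_smul, mul_one]
  simp only [mul_sub, mul_add, smul_sub, smul_add, smul_smul, mul_smul_comm]
  match_scalars <;> field_simp <;> ring

end SqPaper
open SqPaper in
/-- the operators `X₀ = A_L`, `X₁ = Q(A*_ℓ − B*_r K)`, `X₂ = B_L`,
`X₃ = Q(B*_ℓ − A*_r K⁻¹)` satisfy the q-Weyl relations, and `X₁, X₃` satisfy the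
q-Serre relations (the `□^∨_q`-module `𝕍_I`). -/
theorem module_I_relations (F : Type*) [Field F] (q : F) (hq : q ≠ 0)
    (hq1 : ∀ k : ℕ, 0 < k → q ^ k ≠ 1) :
    ∀ X : ZMod 4 → Module.End F (FA F),
      X 0 = AL F →
      X 1 = (1 - q ^ 2) • (lowL F q lA - lowR F q lB ∘ₗ Kop F q) →
      X 2 = BL F →
      X 3 = (1 - q ^ 2) • (lowL F q lB - lowR F q lA ∘ₗ Kinv F q) →
      (∀ i : ZMod 4,
        q • (X i * X (i + 1)) - q⁻¹ • (X (i + 1) * X i)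
          = (q - q⁻¹) • (1 : Module.End F (FA F))) ∧
      X 1 ^ 3 * X 3 - tri F q • (X 1 ^ 2 * X 3 * X 1)
        + tri F q • (X 1 * X 3 * X 1 ^ 2) - X 3 * X 1 ^ 3 = 0 ∧
      X 3 ^ 3 * X 1 - tri F q • (X 3 ^ 2 * X 1 * X 3)
        + tri F q • (X 3 * X 1 * X 3 ^ 2) - X 1 * X 3 ^ 3 = 0 := by
  intro X h0 h1 h2 h3
  have hBA : lB ≠ lA := by decide
  have hAB : lA ≠ lB := by decide
  have hq2 : (q ^ 2 : F) ≠ 0 := pow_ne_zero 2 hq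
  have e1 : X 1 = Xg q lA lB := h1
  have e3 : X 3 = Xg q lB lA := h3
  have W0 : X 1 * X 0 = (q ^ 2) • (X 0 * X 1) + (1 - q ^ 2) • 1 := by
    rw [e1, h0]; exact Xg_mulLeft_same q hq hBA
  have W1 : X 1 * X 2 = (q ^ 2)⁻¹ • (X 2 * X 1) + (1 - (q ^ 2)⁻¹) • 1 := by
    rw [e1, h2]; exact Xg_mulLeft_other q hq hBA
  have W2 : X 3 * X 2 = (q ^ 2) • (X 2 * X 3) + (1 - q ^ 2) • 1 := by
    rw [e3, h2]; exact Xg_mulLeft_same q hq hAB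
  have W3 : X 3 * X 0 = (q ^ 2)⁻¹ • (X 0 * X 3) + (1 - (q ^ 2)⁻¹) • 1 := by
    rw [e3, h0]; exact Xg_mulLeft_other q hq hAB
  have h2q : (q : F) ^ 2 ≠ 1 := hq1 2 (by norm_num)
  have hsub : q - q⁻¹ ≠ 0 := by
    intro e
    apply h2q
    have hh : q * (q - q⁻¹) = q ^ 2 - 1 := by
      rw [mul_sub, mul_inv_cancel₀ hq, ← pow_two]
    rw [e, mul_zero] at hh
    exact sub_eq_zero.mp hh.symm
  have htri : tri F q = q ^ 2 + 1 + (q ^ 2)⁻¹ := by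
    rw [tri, div_eq_iff hsub]
    field_simp
    ring
  have htri' : tri F q = (q ^ 2)⁻¹ + 1 + ((q ^ 2)⁻¹)⁻¹ := by rw [htri, inv_inv]; ring
  have z1 : X 1 (wd F []) = 0 := by rw [e1]; exact Xg_nil q lA lB
  have z3 : X 3 (wd F []) = 0 := by rw [e3]; exact Xg_nil q lB lA
  have wA : ∀ t : List Ltr, wd F (lA :: t) = X 0 (wd F t) := by
    intro t; rw [h0, wd_cons]; rfl
  have wB : ∀ t : List Ltr, wd F (lB :: t) = X 2 (wd F t) := by
    intro t; rw [h2, wd_cons]; rfl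
  have W2' : X 3 * X 2 = ((q ^ 2)⁻¹)⁻¹ • (X 2 * X 3) + (1 - ((q ^ 2)⁻¹)⁻¹) • 1 := by
    rw [inv_inv]; exact W2
  have W0' : X 1 * X 0 = ((q ^ 2)⁻¹)⁻¹ • (X 0 * X 1) + (1 - ((q ^ 2)⁻¹)⁻¹) • 1 := by
    rw [inv_inv]; exact W0
  have p3 : ∀ Z : Module.End F (FA F), Z ^ 3 = Z * (Z * Z) := fun Z => by noncomm_ring
  have p2 : ∀ Z : Module.End F (FA F), Z ^ 2 = Z * Z := fun Z => by noncomm_ring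
  refine ⟨?_, ?_, ?_⟩
  · intro i
    have hi : i = 0 ∨ i = 1 ∨ i = 2 ∨ i = 3 := by
      rcases i with ⟨n, hn⟩
      interval_cases n
      · exact Or.inl rfl
      · exact Or.inr (Or.inl rfl)
      · exact Or.inr (Or.inr (Or.inl rfl))
      · exact Or.inr (Or.inr (Or.inr rfl))
    rcases hi with rfl | rfl | rfl | rfl
    · rw [show ((0 : ZMod 4) + 1) = 1 by decide, W0]
      match_scalars <;> field_simp <;> ring
    · rw [show ((1 : ZMod 4) + 1) = 2 by decide, W1]
      match_scalars <;> field_simp <;> ring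
    · rw [show ((2 : ZMod 4) + 1) = 3 by decide, W2]
      match_scalars <;> field_simp <;> ring
    · rw [show ((3 : ZMod 4) + 1) = 0 by decide, W3]
      match_scalars <;> field_simp <;> ring
  · set S := X 1 * (X 1 * (X 1 * X 3)) - tri F q • (X 1 * (X 1 * (X 3 * X 1)))
      + tri F q • (X 1 * (X 3 * (X 1 * X 1))) - X 3 * (X 1 * (X 1 * X 1)) with hS
    have c0 : S * X 0 = (q ^ 2 * q ^ 2) • (X 0 * S) :=
      key_comm hq2 htri (X 1) (X 3) (X 0) W0 W3
    have c2 : S * X 2 = ((q ^ 2)⁻¹ * (q ^ 2)⁻¹) • (X 2 * S) :=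
      key_comm (inv_ne_zero hq2) htri' (X 1) (X 3) (X 2) W1 W2'
    have hz : ∀ l : List Ltr, S (wd F l) = 0 := by
      intro l
      induction l with
      | nil =>
        rw [hS]
        simp [LinearMap.sub_apply, LinearMap.add_apply, LinearMap.smul_apply,
          Module.End.mul_apply, z1, z3]
      | cons a t ih =>
        have ha : a = lA ∨ a = lB := match a with
          | 0 => Or.inl rfl
          | 1 => Or.inr rfl
        rcases ha with ha | ha <;> subst ha
        · rw [wA t, ← Module.End.mul_apply, c0, LinearMap.smul_apply, Module.End.mul_apply,
            ih, map_zero, smul_zero]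
        · rw [wB t, ← Module.End.mul_apply, c2, LinearMap.smul_apply, Module.End.mul_apply,
            ih, map_zero, smul_zero]
    have hS0 : S = 0 := lhom_ext fun l => by rw [hz l]; rfl
    have hfin : X 1 ^ 3 * X 3 - tri F q • (X 1 ^ 2 * X 3 * X 1)
        + tri F q • (X 1 * X 3 * X 1 ^ 2) - X 3 * X 1 ^ 3 = S := by
      rw [hS, p3, p2]
      simp only [mul_assoc]
    exact hfin.trans hS0
  · set S := X 3 * (X 3 * (X 3 * X 1)) - tri F q • (X 3 * (X 3 * (X 1 * X 3)))
      + tri F q • (X 3 * (X 1 * (X 3 * X 3))) - X 1 * (X 3 * (X 3 * X 3)) with hS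
    have c2 : S * X 2 = (q ^ 2 * q ^ 2) • (X 2 * S) :=
      key_comm hq2 htri (X 3) (X 1) (X 2) W2 W1
    have c0 : S * X 0 = ((q ^ 2)⁻¹ * (q ^ 2)⁻¹) • (X 0 * S) :=
      key_comm (inv_ne_zero hq2) htri' (X 3) (X 1) (X 0) W3 W0'
    have hz : ∀ l : List Ltr, S (wd F l) = 0 := by
      intro l
      induction l with
      | nil =>
        rw [hS]
        simp [LinearMap.sub_apply, LinearMap.add_apply, LinearMap.smul_apply,
          Module.End.mul_apply, z1, z3]
      | cons a t ih =>
        have ha : a = lA ∨ a = lB := match a with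
          | 0 => Or.inl rfl
          | 1 => Or.inr rfl
        rcases ha with ha | ha <;> subst ha
        · rw [wA t, ← Module.End.mul_apply, c0, LinearMap.smul_apply, Module.End.mul_apply,
            ih, map_zero, smul_zero]
        · rw [wB t, ← Module.End.mul_apply, c2, LinearMap.smul_apply, Module.End.mul_apply,
            ih, map_zero, smul_zero]
    have hS0 : S = 0 := lhom_ext fun l => by rw [hz l]; rfl
    have hfin : X 3 ^ 3 * X 1 - tri F q • (X 3 ^ 2 * X 1 * X 3)
        + tri F q • (X 3 * X 1 * X 3 ^ 2) - X 1 * X 3 ^ 3 = S := by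
      rw [hS, p3, p2]
      simp only [mul_assoc]
    exact hfin.trans hS0
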